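/- arXiv:1711.07884 — 3 statements merged into one kernel-verified Lean document; each statement's English description precedes it below -/
import Mathlib

section
/- Sample m items without replacement from a finite list x_1,...,x_M of real numbers, obtaining X_1,...,X_m, and let S_m = X_1 + ... + X_m, μ = (1/M)·Σ x_i, y_0 = min x_i, y_1 = max x_i. Then for every t > 0, P[S_m ≥ mμ + mt] ≤ exp(-2mt²/(y_1 - y_0)²). -/
open scoped Classical

section SerflingAux

open Finset Real

lemma serfling_core (k : ℕ) (s u : ℝ) (hs : 0 ≤ s) (hu : 0 ≤ u) :
    ((k : ℝ) + 1) * s * u ^ k ≤ s ^ (k + 1) + (k : ℝ) * u ^ (k + 1) := by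
  have hg := geom_sum₂_mul s u (k + 1)
  have hkey : ((k : ℝ) + 1) * u ^ k * (s - u) ≤ s ^ (k + 1) - u ^ (k + 1) := by
    rw [← hg]
    rcases le_total u s with h | h
    · apply mul_le_mul_of_nonneg_right _ (by linarith)
      have : ∀ i ∈ range (k + 1), u ^ k ≤ s ^ i * u ^ (k + 1 - 1 - i) := by
        intro i hi
        simp only [mem_range] at hi
        have hik : i ≤ k := Nat.lt_succ_iff.mp hi
        calc u ^ k = u ^ i * u ^ (k - i) := by rw [← pow_add]; congr 1; omega
          _ ≤ s ^ i * u ^ (k + 1 - 1 - i) := by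
              have : k + 1 - 1 - i = k - i := by omega
              rw [this]
              exact mul_le_mul_of_nonneg_right (pow_le_pow_left₀ hu h i)
                (pow_nonneg hu _)
      have := Finset.sum_le_sum this
      simpa [Finset.sum_const, Finset.card_range, mul_comm] using this
    · rw [show ((k:ℝ)+1) * u ^ k * (s-u) = -(((k:ℝ)+1) * u ^ k * (u-s)) by ring,
        show (∑ i ∈ range (k+1), s ^ i * u ^ (k+1-1-i)) * (s - u)
          = -((∑ i ∈ range (k+1), s ^ i * u ^ (k+1-1-i)) * (u - s)) by ring]
      apply neg_le_neg
      apply mul_le_mul_of_nonneg_right _ (by linarith)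
      have : ∀ i ∈ range (k + 1), s ^ i * u ^ (k + 1 - 1 - i) ≤ u ^ k := by
        intro i hi
        simp only [mem_range] at hi
        have hik : i ≤ k := Nat.lt_succ_iff.mp hi
        calc s ^ i * u ^ (k + 1 - 1 - i) ≤ u ^ i * u ^ (k + 1 - 1 - i) :=
              mul_le_mul_of_nonneg_right (pow_le_pow_left₀ hs h i) (pow_nonneg hu _)
          _ = u ^ k := by rw [← pow_add]; congr 1; omega
      have := Finset.sum_le_sum this
      simpa [Finset.sum_const, Finset.card_range, mul_comm] using this
  nlinarith [hkey, pow_succ u k]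

lemma serfling_maclaurin {ι : Type*} [DecidableEq ι] (s : Finset ι) (m : ℕ) (a : ι → ℝ)
    (ha : ∀ i ∈ s, 0 ≤ a i) :
    ∑ t ∈ s.powersetCard m, ∏ i ∈ t, a i
      ≤ (s.card.choose m : ℝ) * ((∑ i ∈ s, a i) / s.card) ^ m := by
  induction s using Finset.cons_induction generalizing m with
  | empty =>
    cases m with
    | zero => simp
    | succ k =>
      rw [Finset.powersetCard_eq_empty.mpr (by simp)]
      simp
  | cons y s hy ih =>
    cases m with
    | zero => simp
    | succ k =>
      have ha' : ∀ i ∈ s, 0 ≤ a i := fun i hi => ha i (mem_cons.mpr (Or.inr hi))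
      have hay : 0 ≤ a y := ha y (mem_cons_self y s)
      have hM : ∀ i ∈ s, True := fun _ _ => trivial
      set M := s.card with hMdef
      set u : ℝ := (∑ i ∈ s, a i) / M with hudef
      set S : ℝ := ∑ i ∈ cons y s hy, a i with hSdef
      set s_ : ℝ := S / (M + 1) with hsdef
      have hu : 0 ≤ u := div_nonneg (Finset.sum_nonneg ha') (Nat.cast_nonneg M)
      have hS : S = (∑ i ∈ s, a i) + a y := by rw [hSdef, Finset.sum_cons]; ring
      have hsum : ∑ i ∈ s, a i = M * u := by
        rcases Nat.eq_zero_or_pos M with h0 | hpos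
        · have : s = ∅ := Finset.card_eq_zero.mp h0
          simp [this, h0, hudef]
        · rw [hudef]; field_simp
      have hs_ : 0 ≤ s_ := by
        rw [hsdef, hS]
        have := Finset.sum_nonneg ha'
        apply div_nonneg (by linarith) (by have := Nat.cast_nonneg (α := ℝ) M; linarith)
      have hScard : (cons y s hy).card = M + 1 := by rw [card_cons]
      have hSs : S = (M + 1) * s_ := by rw [hsdef]; field_simp
      -- decompose the sum
      have hdec : ∑ t ∈ (cons y s hy).powersetCard (k+1), ∏ i ∈ t, a i
          = (∑ t ∈ s.powersetCard (k+1), ∏ i ∈ t, a i)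
            + a y * ∑ t ∈ s.powersetCard k, ∏ i ∈ t, a i := by
        rw [cons_eq_insert, powersetCard_succ_insert hy, Finset.sum_union, Finset.sum_image]
        · rw [Finset.mul_sum]
          congr 1
          apply Finset.sum_congr rfl
          intro t ht
          have hyt : y ∉ t := fun h => hy ((Finset.mem_powersetCard.mp ht).1 h)
          rw [Finset.prod_insert hyt]
        · intro t ht t' ht' h
          have hyt : y ∉ t := fun hh => hy ((Finset.mem_powersetCard.mp ht).1 hh)
          have hyt' : y ∉ t' := fun hh => hy ((Finset.mem_powersetCard.mp ht').1 hh)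
          ext z
          constructor <;> intro hz
          · have := Finset.mem_insert_self z t
            have : z ∈ insert y t' := h ▸ Finset.mem_insert_of_mem hz
            rcases Finset.mem_insert.mp this with rfl | hz'
            · exact absurd hz hyt
            · exact hz'
          · have : z ∈ insert y t := h ▸ Finset.mem_insert_of_mem hz
            rcases Finset.mem_insert.mp this with rfl | hz'
            · exact absurd hz hyt'
            · exact hz'
        · rw [Finset.disjoint_left]
          intro t ht ht2
          obtain ⟨t', hmem, rfl⟩ := Finset.mem_image.mp ht2
          exact hy ((Finset.mem_powersetCard.mp ht).1 (Finset.mem_insert_self y t'))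
      rw [hdec, hScard]
      have ih1 := ih (k+1) ha'
      have ih2 := ih k ha'
      set b : ℝ := (M.choose (k+1) : ℝ)
      set c : ℝ := (M.choose k : ℝ)
      set B : ℝ := ((M+1).choose (k+1) : ℝ)
      have hc : 0 ≤ c := Nat.cast_nonneg _
      have hB : 0 ≤ B := Nat.cast_nonneg _
      have hPascal : B = b + c := by
        show (((M+1).choose (k+1) : ℕ) : ℝ) = ((M.choose (k+1) : ℕ) : ℝ) + ((M.choose k : ℕ) : ℝ)
        rw [Nat.choose_succ_succ M k]
        push_cast; ring
      have hBc : ((k:ℝ) + 1) * B = ((M:ℝ) + 1) * c := by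
        have h2 : (((M+1) * M.choose k : ℕ) : ℝ) = (((M+1).choose (k+1) * (k+1) : ℕ) : ℝ) := by
          exact_mod_cast congrArg (Nat.cast : ℕ → ℝ) (Nat.add_one_mul_choose_eq M k)
        push_cast at h2
        show ((k:ℝ) + 1) * (((M+1).choose (k+1) : ℕ) : ℝ) = ((M:ℝ) + 1) * ((M.choose k : ℕ) : ℝ)
        linarith [h2]
      -- combine
      have step1 : (∑ t ∈ s.powersetCard (k+1), ∏ i ∈ t, a i)
            + a y * ∑ t ∈ s.powersetCard k, ∏ i ∈ t, a i
          ≤ b * u ^ (k+1) + a y * (c * u ^ k) := by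
        have := mul_le_mul_of_nonneg_left ih2 hay
        have h1 : (∑ t ∈ s.powersetCard (k+1), ∏ i ∈ t, a i) ≤ b * u ^ (k+1) := ih1
        linarith
      have hcore := serfling_core k s_ u hs_ hu
      have step2 : b * u ^ (k+1) + a y * (c * u ^ k) ≤ B * s_ ^ (k+1) := by
        have hay2 : a y = ((M:ℝ)+1) * s_ - M * u := by
          rw [← hSs] at *
          linarith [hS, hsum]
        have hmul := mul_le_mul_of_nonneg_left hcore hB
        have hup : u ^ (k+1) = u * u ^ k := by ring
        have hzero : b - (M:ℝ)*c + (k:ℝ)*B = 0 := by linarith [hPascal, hBc]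
        have e1 : (b - (M:ℝ)*c + (k:ℝ)*B) * (u*u^k) = 0 := by rw [hzero, zero_mul]
        have e2 : ((k:ℝ)+1)*B*(s_*u^k) = ((M:ℝ)+1)*c*(s_*u^k) := by rw [hBc]
        rw [hup] at hmul
        rw [hay2, hup]
        nlinarith [hmul, e1, e2]
      calc _ ≤ b * u ^ (k+1) + a y * (c * u ^ k) := step1
        _ ≤ B * s_ ^ (k+1) := step2
        _ = ↑((M + 1).choose (k + 1)) * (S / (↑(M + 1) : ℝ)) ^ (k + 1) := by
              rw [hsdef]; push_cast; ring
      

lemma serfling_D_pos {q : ℝ} (hq : 0 ≤ q) (hq1 : q ≤ 1) (h : ℝ) :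
    0 < 1 - q + q * Real.exp h := by
  rcases le_or_gt 1 (Real.exp h) with h1 | h1
  · nlinarith [mul_nonneg hq (sub_nonneg.2 h1)]
  · nlinarith [mul_nonneg (sub_nonneg.2 hq1) (sub_nonneg.2 h1.le), Real.exp_pos h]

lemma serfling_hoeffding_core {q : ℝ} (hq : 0 ≤ q) (hq1 : q ≤ 1) (h : ℝ) :
    1 - q + q * Real.exp h ≤ Real.exp (q * h + h ^ 2 / 8) := by
  set D : ℝ → ℝ := fun z => 1 - q + q * Real.exp z with hD
  have hDpos : ∀ z, 0 < D z := fun z => serfling_D_pos hq hq1 z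
  set g : ℝ → ℝ := fun z => q * z + z ^ 2 / 8 - Real.log (D z) with hg
  set g' : ℝ → ℝ := fun z => q + z / 4 - q * Real.exp z / D z with hg'
  have hDd : ∀ z, HasDerivAt D (q * Real.exp z) z := by
    intro z
    have := (hasDerivAt_const z (1 - q)).add ((Real.hasDerivAt_exp z).const_mul q)
    rw [zero_add] at this
    exact this
  have hgd : ∀ z, HasDerivAt g (g' z) z := by
    intro z
    have h1 : HasDerivAt (fun z : ℝ => q * z) q z := by
      simpa using (hasDerivAt_id z).const_mul q
    have h2 : HasDerivAt (fun z : ℝ => z ^ 2 / 8) (z / 4) z := by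
      have := (hasDerivAt_pow 2 z).div_const 8
      exact this.congr_deriv (by rw [show (2:ℕ) - 1 = 1 from rfl]; push_cast; ring)
    have h3 : HasDerivAt (fun z => Real.log (D z)) (q * Real.exp z / D z) z :=
      (hDd z).log (ne_of_gt (hDpos z))
    exact (h1.add h2).sub h3
  have hgd' : ∀ z, HasDerivAt g'
      (1 / 4 - (q * Real.exp z * D z - q * Real.exp z * (q * Real.exp z)) / (D z) ^ 2) z := by
    intro z
    have h1 : HasDerivAt (fun z : ℝ => q + z / 4) (1 / 4) z := by
      have := (hasDerivAt_const z q).add ((hasDerivAt_id z).div_const 4)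
      rw [zero_add] at this
      exact this
    have h2 : HasDerivAt (fun z => q * Real.exp z / D z)
        ((q * Real.exp z * D z - q * Real.exp z * (q * Real.exp z)) / (D z) ^ 2) z :=
      ((Real.hasDerivAt_exp z).const_mul q).div (hDd z) (ne_of_gt (hDpos z))
    exact h1.sub h2
  have hg''nonneg : ∀ z, 0 ≤ 1 / 4 - (q * Real.exp z * D z - q * Real.exp z * (q * Real.exp z)) / (D z) ^ 2 := by
    intro z
    rw [sub_nonneg, div_le_iff₀ (pow_pos (hDpos z) 2)]
    have hE := Real.exp_pos z
    simp only [hD]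
    nlinarith [sq_nonneg (1 - q - q * Real.exp z)]
  have hg'mono : Monotone g' := by
    apply monotone_of_deriv_nonneg
    · exact fun z => (hgd' z).differentiableAt
    · intro z
      rw [(hgd' z).deriv]
      exact hg''nonneg z
  have hg'0 : g' 0 = 0 := by
    simp [hg', hD]
  have hg0 : g 0 = 0 := by
    simp [hg, hD]
  have hgdiff : Differentiable ℝ g := fun z => (hgd z).differentiableAt
  have hderiv : ∀ z, deriv g z = g' z := fun z => (hgd z).deriv
  have hgnonneg : ∀ z, 0 ≤ g z := by
    intro z
    rcases le_total 0 z with hz | hz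
    · have hmono : MonotoneOn g (Set.Ici (0:ℝ)) := by
        apply monotoneOn_of_deriv_nonneg (convex_Ici 0)
          hgdiff.continuous.continuousOn hgdiff.differentiableOn
        intro w hw
        rw [hderiv w]
        rw [interior_Ici] at hw
        have : g' 0 ≤ g' w := hg'mono (le_of_lt hw)
        linarith [hg'0]
      have := hmono Set.self_mem_Ici (Set.mem_Ici.mpr hz) hz
      linarith [hg0]
    · have hanti : AntitoneOn g (Set.Iic (0:ℝ)) := by
        apply antitoneOn_of_deriv_nonpos (convex_Iic 0)
          hgdiff.continuous.continuousOn hgdiff.differentiableOn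
        intro w hw
        rw [hderiv w]
        rw [interior_Iic] at hw
        have : g' w ≤ g' 0 := hg'mono (le_of_lt hw)
        linarith [hg'0]
      have := hanti (Set.mem_Iic.mpr hz) Set.self_mem_Iic hz
      linarith [hg0]
  have := hgnonneg h
  have hlog : Real.log (D h) ≤ q * h + h ^ 2 / 8 := by
    simp only [hg] at this
    linarith
  calc D h = Real.exp (Real.log (D h)) := (Real.exp_log (hDpos h)).symm
    _ ≤ Real.exp (q * h + h ^ 2 / 8) := Real.exp_le_exp.mpr hlog

lemma serfling_emb_sum (M m : ℕ) (a : Fin M → ℝ) :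
    ∑ σ : Fin m ↪ Fin M, ∏ i, a (σ i)
      = ((Nat.factorial m) : ℝ) * ∑ t ∈ (Finset.univ : Finset (Fin M)).powersetCard m, ∏ i ∈ t, a i := by
  have hmap : ∀ σ : Fin m ↪ Fin M, σ ∈ (Finset.univ : Finset (Fin m ↪ Fin M)) →
      Finset.image σ Finset.univ ∈ (Finset.univ : Finset (Fin M)).powersetCard m := by
    intro σ _
    rw [Finset.mem_powersetCard]
    exact ⟨Finset.subset_univ _, by
      rw [Finset.card_image_of_injective _ σ.injective, Finset.card_univ, Fintype.card_fin]⟩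
  rw [← Finset.sum_fiberwise_of_maps_to hmap (fun σ => ∏ i, a (σ i))]
  rw [Finset.mul_sum]
  apply Finset.sum_congr rfl
  intro t ht
  obtain ⟨-, htc⟩ := Finset.mem_powersetCard.mp ht
  have hprod : ∀ σ : Fin m ↪ Fin M, Finset.image (⇑σ) Finset.univ = t →
      ∏ i, a (σ i) = ∏ i ∈ t, a i := by
    intro σ hσ
    rw [← hσ, Finset.prod_image (fun i _ j _ h => σ.injective h)]
  have hcount : ((Finset.univ : Finset (Fin m ↪ Fin M)).filter
      (fun σ : Fin m ↪ Fin M => Finset.image (⇑σ) Finset.univ = t)).card = (Nat.factorial m) := by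
    have he : {σ : Fin m ↪ Fin M // Finset.image (⇑σ) Finset.univ = t} ≃ (Fin m ↪ {z // z ∈ t}) :=
      { toFun := fun σ => Function.Embedding.codRestrict {z | z ∈ t} σ.1
          (fun i => by
            have : σ.1 i ∈ Finset.image σ.1 Finset.univ :=
              Finset.mem_image_of_mem _ (Finset.mem_univ i)
            rw [σ.2] at this
            exact this)
        invFun := fun τ => ⟨τ.trans (Function.Embedding.subtype _), by
          apply Finset.eq_of_subset_of_card_le
          · intro z hz
            obtain ⟨i, -, rfl⟩ := Finset.mem_image.mp hz
            exact (τ i).2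
          · rw [Finset.card_image_of_injective _ (τ.trans (Function.Embedding.subtype _)).injective,
              Finset.card_univ, Fintype.card_fin, htc]⟩
        left_inv := fun σ => by
          apply Subtype.ext
          ext i
          rfl
        right_inv := fun τ => by
          ext i
          rfl }
    rw [← Fintype.card_subtype, Fintype.card_congr he, Fintype.card_embedding_eq,
      Fintype.card_coe, htc, Fintype.card_fin, Nat.descFactorial_self]
  calc ∑ σ ∈ (Finset.univ : Finset (Fin m ↪ Fin M)).filter
        (fun σ : Fin m ↪ Fin M => Finset.image (⇑σ) Finset.univ = t), ∏ i, a (σ i)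
      = ∑ _σ ∈ (Finset.univ : Finset (Fin m ↪ Fin M)).filter
        (fun σ : Fin m ↪ Fin M => Finset.image (⇑σ) Finset.univ = t), ∏ i ∈ t, a i :=
        Finset.sum_congr rfl (fun σ hσ => hprod σ (Finset.mem_filter.mp hσ).2)
    _ = ((Nat.factorial m) : ℝ) * ∏ i ∈ t, a i := by
        rw [Finset.sum_const, hcount, nsmul_eq_mul]

lemma serfling_mgf (M : ℕ) (hM : 0 < M) (x : Fin M → ℝ) (μ y0 y1 : ℝ)
    (hμ : μ = (∑ i, x i) / M) (hlo : ∀ i, y0 ≤ x i) (hhi : ∀ i, x i ≤ y1)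
    (hc : y0 < y1) (L : ℝ) :
    (∑ i, Real.exp (L * x i)) / M ≤ Real.exp (L * μ + L ^ 2 * (y1 - y0) ^ 2 / 8) := by
  set c : ℝ := y1 - y0 with hcdef
  have hcpos : 0 < c := by rw [hcdef]; linarith
  have hMr : (0:ℝ) < M := by exact_mod_cast hM
  have hsum : ∑ i, x i = M * μ := by rw [hμ]; field_simp
  have hconstsum : ∀ r : ℝ, ∑ _i : Fin M, r = M * r := by
    intro r
    rw [Finset.sum_const, Finset.card_univ, Fintype.card_fin, nsmul_eq_mul]
  have hμlo : y0 ≤ μ := by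
    have h1 : ∑ _i : Fin M, y0 ≤ ∑ i, x i := Finset.sum_le_sum (fun i _ => hlo i)
    rw [hconstsum, hsum] at h1
    nlinarith
  have hμhi : μ ≤ y1 := by
    have h1 : ∑ i, x i ≤ ∑ _i : Fin M, y1 := Finset.sum_le_sum (fun i _ => hhi i)
    rw [hconstsum, hsum] at h1
    nlinarith
  set q : ℝ := (μ - y0) / c with hqdef
  have hq : 0 ≤ q := div_nonneg (by linarith) hcpos.le
  have hq1 : q ≤ 1 := by rw [hqdef, div_le_one hcpos]; linarith
  have hqc : q * c = μ - y0 := by rw [hqdef]; field_simp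
  have hconv : ∀ i, Real.exp (L * x i)
      ≤ ((y1 - x i) / c) * Real.exp (L * y0) + ((x i - y0) / c) * Real.exp (L * y1) := by
    intro i
    have hab : ((y1 - x i) / c) + ((x i - y0) / c) = 1 := by
      rw [← add_div, hcdef, div_eq_one_iff_eq (by linarith : y1 - y0 ≠ 0)]
      ring
    have h := convexOn_exp.2
      (Set.mem_univ (L * y0)) (Set.mem_univ (L * y1))
      (show (0:ℝ) ≤ (y1 - x i) / c from div_nonneg (by linarith [hhi i]) hcpos.le)
      (show (0:ℝ) ≤ (x i - y0) / c from div_nonneg (by linarith [hlo i]) hcpos.le)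
      hab
    have harg : ((y1 - x i) / c) • (L * y0) + ((x i - y0) / c) • (L * y1) = L * x i := by
      simp only [smul_eq_mul]
      field_simp
      ring
    rw [harg] at h
    simpa [smul_eq_mul] using h
  have hsum2 : ∑ i, Real.exp (L * x i)
      ≤ M * ((1 - q) * Real.exp (L * y0) + q * Real.exp (L * y1)) := by
    have h1 : ∑ i, Real.exp (L * x i)
        ≤ ∑ i, (((y1 - x i) / c) * Real.exp (L * y0) + ((x i - y0) / c) * Real.exp (L * y1)) :=
      Finset.sum_le_sum (fun i _ => hconv i)
    have h2 : ∑ i, (((y1 - x i) / c) * Real.exp (L * y0) + ((x i - y0) / c) * Real.exp (L * y1))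
        = M * ((1 - q) * Real.exp (L * y0) + q * Real.exp (L * y1)) := by
      rw [Finset.sum_add_distrib, ← Finset.sum_mul, ← Finset.sum_mul, ← Finset.sum_div,
        ← Finset.sum_div, Finset.sum_sub_distrib, Finset.sum_sub_distrib, hsum,
        hconstsum y1, hconstsum y0, hqdef]
      field_simp
      ring
    linarith
  have hcore := serfling_hoeffding_core hq hq1 (L * c)
  have hy1e : Real.exp (L * y1) = Real.exp (L * y0) * Real.exp (L * c) := by
    rw [← Real.exp_add]
    congr 1
    rw [hcdef]; ring
  have hfin : (1 - q) * Real.exp (L * y0) + q * Real.exp (L * y1)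
      ≤ Real.exp (L * μ + L ^ 2 * c ^ 2 / 8) := by
    have h3 : (1 - q) * Real.exp (L * y0) + q * Real.exp (L * y1)
        = Real.exp (L * y0) * (1 - q + q * Real.exp (L * c)) := by
      rw [hy1e]; ring
    rw [h3]
    calc Real.exp (L * y0) * (1 - q + q * Real.exp (L * c))
        ≤ Real.exp (L * y0) * Real.exp (q * (L * c) + (L * c) ^ 2 / 8) :=
          mul_le_mul_of_nonneg_left hcore (Real.exp_pos _).le
      _ = Real.exp (L * y0 + q * (L * c) + (L * c) ^ 2 / 8) := by
          rw [← Real.exp_add]; ring_nf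
      _ = Real.exp (L * μ + L ^ 2 * c ^ 2 / 8) := by
          congr 1
          have : L * y0 + q * (L * c) = L * μ := by
            linear_combination L * hqc
          rw [← this]; ring
  rw [div_le_iff₀ hMr]
  calc ∑ i, Real.exp (L * x i) ≤ M * ((1 - q) * Real.exp (L * y0) + q * Real.exp (L * y1)) := hsum2
    _ ≤ M * Real.exp (L * μ + L ^ 2 * c ^ 2 / 8) := mul_le_mul_of_nonneg_left hfin hMr.le
    _ = Real.exp (L * μ + L ^ 2 * (y1 - y0) ^ 2 / 8) * M := by rw [hcdef]; ring

end SerflingAux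

/-- Serfling's inequality: sampling `m` values without replacement (uniformly over
injections `Fin m ↪ Fin M`) from `x_1,...,x_M`, with `μ` the mean, `y_0` the minimum
and `y_1` the maximum of the `x_i`, for every `t > 0` the probability that the sample
sum exceeds `mμ + mt` is at most `exp(-2mt²/(y_1-y_0)²)`. -/
theorem serfling (M m : ℕ) (hm : m ≤ M) (x : Fin M → ℝ)
    (μ y0 y1 : ℝ) (hμ : μ = (∑ i, x i) / M)
    (hy0 : IsLeast (Set.range x) y0) (hy1 : IsGreatest (Set.range x) y1)
    (t : ℝ) (ht : 0 < t) :
    (((Finset.univ : Finset (Fin m ↪ Fin M)).filter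
        (fun σ => (m : ℝ) * μ + m * t ≤ ∑ i, x (σ i))).card : ℝ) /
      ((Finset.univ : Finset (Fin m ↪ Fin M)).card : ℝ)
      ≤ Real.exp (-2 * m * t ^ 2 / (y1 - y0) ^ 2) := by
  have hlo : ∀ i, y0 ≤ x i := fun i => hy0.2 ⟨i, rfl⟩
  have hhi : ∀ i, x i ≤ y1 := fun i => hy1.2 ⟨i, rfl⟩
  have hy01 : y0 ≤ y1 := hy0.2 hy1.1
  have hM : 0 < M := by
    obtain ⟨i, -⟩ := hy0.1
    exact i.pos
  have hMr : (0:ℝ) < M := by exact_mod_cast hM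
  have hN : ((Finset.univ : Finset (Fin m ↪ Fin M)).card) = M.descFactorial m := by
    rw [Finset.card_univ, Fintype.card_embedding_eq, Fintype.card_fin, Fintype.card_fin]
  have hNpos : 0 < ((Finset.univ : Finset (Fin m ↪ Fin M)).card) := by
    rw [hN]
    apply Nat.pos_of_ne_zero
    intro h
    rw [Nat.descFactorial_eq_zero_iff_lt] at h
    omega
  have hNr : (0:ℝ) < ((Finset.univ : Finset (Fin m ↪ Fin M)).card : ℝ) := by exact_mod_cast hNpos
  rcases Nat.eq_zero_or_pos m with rfl | hm0
  · have hfilter : (Finset.univ : Finset (Fin 0 ↪ Fin M)).filter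
        (fun σ => ((0:ℕ) : ℝ) * μ + ((0:ℕ):ℝ) * t ≤ ∑ i, x (σ i)) = Finset.univ := by
      apply Finset.filter_true_of_mem
      intro σ _
      simp
    rw [hfilter, div_self (ne_of_gt hNr)]
    have h0 : (-2 * ((0:ℕ):ℝ) * t ^ 2 / (y1 - y0) ^ 2) = 0 := by
      simp
    rw [h0, Real.exp_zero]
  rcases eq_or_lt_of_le hy01 with heq | hlt
  · have hxall : ∀ i, x i = y0 := fun i => le_antisymm (heq ▸ hhi i) (hlo i)
    have hμ0 : μ = y0 := by
      rw [hμ]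
      have hs : ∑ i, x i = (M:ℝ) * y0 := by
        rw [Finset.sum_congr rfl (fun i _ => hxall i), Finset.sum_const, Finset.card_univ,
          Fintype.card_fin, nsmul_eq_mul]
      rw [hs]
      field_simp
    have hfilter : (Finset.univ : Finset (Fin m ↪ Fin M)).filter
        (fun σ => (m : ℝ) * μ + m * t ≤ ∑ i, x (σ i)) = ∅ := by
      apply Finset.filter_false_of_mem
      intro σ _
      have hs : ∑ i, x (σ i) = (m:ℝ) * μ := by
        rw [Finset.sum_congr rfl (fun i _ => hxall (σ i)), Finset.sum_const, Finset.card_univ,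
          Fintype.card_fin, nsmul_eq_mul, hμ0]
      rw [hs]
      push_neg
      have hmr : (0:ℝ) < m := by exact_mod_cast hm0
      nlinarith
    rw [hfilter]
    simp only [Finset.card_empty, Nat.cast_zero, zero_div]
    exact (Real.exp_pos _).le
  set c : ℝ := y1 - y0 with hcdef
  have hcpos : 0 < c := by rw [hcdef]; linarith
  set L : ℝ := 4 * t / c ^ 2 with hLdef
  have hL : 0 < L := by positivity
  set a : Fin M → ℝ := fun j => Real.exp (L * x j) with hadef
  have hTchain : (((Finset.univ : Finset (Fin m ↪ Fin M)).filter
      (fun σ => (m : ℝ) * μ + m * t ≤ ∑ i, x (σ i))).card : ℝ)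
      ≤ Real.exp (-(L * ((m:ℝ) * μ + m * t))) * ∑ σ : Fin m ↪ Fin M, ∏ i, a (σ i) := by
    have step1 : (((Finset.univ : Finset (Fin m ↪ Fin M)).filter
        (fun σ => (m : ℝ) * μ + m * t ≤ ∑ i, x (σ i))).card : ℝ)
        ≤ ∑ σ ∈ (Finset.univ : Finset (Fin m ↪ Fin M)).filter
            (fun σ => (m : ℝ) * μ + m * t ≤ ∑ i, x (σ i)),
            Real.exp (L * (∑ i, x (σ i)) - L * ((m:ℝ) * μ + m * t)) := by
      rw [Finset.card_eq_sum_ones, Nat.cast_sum]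
      apply Finset.sum_le_sum
      intro σ hσ
      have hcond := (Finset.mem_filter.mp hσ).2
      have hnn : (0:ℝ) ≤ L * (∑ i, x (σ i)) - L * ((m:ℝ) * μ + m * t) := by
        have := mul_le_mul_of_nonneg_left hcond hL.le
        linarith
      simpa using Real.one_le_exp hnn
    have step2 : ∑ σ ∈ (Finset.univ : Finset (Fin m ↪ Fin M)).filter
            (fun σ => (m : ℝ) * μ + m * t ≤ ∑ i, x (σ i)),
            Real.exp (L * (∑ i, x (σ i)) - L * ((m:ℝ) * μ + m * t))
        ≤ ∑ σ : Fin m ↪ Fin M,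
            Real.exp (L * (∑ i, x (σ i)) - L * ((m:ℝ) * μ + m * t)) :=
      Finset.sum_le_sum_of_subset_of_nonneg (Finset.filter_subset _ _)
        (fun _ _ _ => (Real.exp_pos _).le)
    have step3 : ∑ σ : Fin m ↪ Fin M,
            Real.exp (L * (∑ i, x (σ i)) - L * ((m:ℝ) * μ + m * t))
        = Real.exp (-(L * ((m:ℝ) * μ + m * t))) * ∑ σ : Fin m ↪ Fin M, ∏ i, a (σ i) := by
      rw [Finset.mul_sum]
      apply Finset.sum_congr rfl
      intro σ _
      rw [sub_eq_neg_add, Real.exp_add, Finset.mul_sum, Real.exp_sum]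
    linarith
  have hmac : ∑ σ : Fin m ↪ Fin M, ∏ i, a (σ i)
      ≤ ((Finset.univ : Finset (Fin m ↪ Fin M)).card : ℝ) * ((∑ j, a j) / M) ^ m := by
    rw [serfling_emb_sum M m a]
    have h1 := serfling_maclaurin (Finset.univ : Finset (Fin M)) m a
      (fun i _ => (Real.exp_pos _).le)
    rw [Finset.card_univ, Fintype.card_fin] at h1
    have h2 := mul_le_mul_of_nonneg_left h1 (by positivity : (0:ℝ) ≤ ((Nat.factorial m) : ℝ))
    calc ((Nat.factorial m) : ℝ) * ∑ t ∈ (Finset.univ : Finset (Fin M)).powersetCard m, ∏ i ∈ t, a i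
        ≤ ((Nat.factorial m) : ℝ) * ((M.choose m : ℝ) * ((∑ j, a j) / M) ^ m) := h2
      _ = ((Finset.univ : Finset (Fin m ↪ Fin M)).card : ℝ) * ((∑ j, a j) / M) ^ m := by
          rw [hN]
          rw [show (M.descFactorial m : ℝ) = ((Nat.factorial m * M.choose m : ℕ) : ℝ) by
            rw [Nat.descFactorial_eq_factorial_mul_choose]]
          push_cast
          ring
  have hmgf : (∑ j, a j) / M ≤ Real.exp (L * μ + L ^ 2 * c ^ 2 / 8) :=
    serfling_mgf M hM x μ y0 y1 hμ hlo hhi hlt L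
  have hbase : (0:ℝ) ≤ (∑ j, a j) / M := by
    apply div_nonneg _ hMr.le
    exact Finset.sum_nonneg (fun j _ => (Real.exp_pos _).le)
  have hpow : ((∑ j, a j) / M) ^ m ≤ Real.exp (L * μ + L ^ 2 * c ^ 2 / 8) ^ m :=
    pow_le_pow_left₀ hbase hmgf m
  have hexp : Real.exp (L * μ + L ^ 2 * c ^ 2 / 8) ^ m
      = Real.exp ((m:ℝ) * (L * μ + L ^ 2 * c ^ 2 / 8)) := by
    rw [← Real.exp_nat_mul]
  have hfinal : (((Finset.univ : Finset (Fin m ↪ Fin M)).filter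
      (fun σ => (m : ℝ) * μ + m * t ≤ ∑ i, x (σ i))).card : ℝ)
      ≤ ((Finset.univ : Finset (Fin m ↪ Fin M)).card : ℝ)
        * Real.exp (-2 * m * t ^ 2 / (y1 - y0) ^ 2) := by
    have hE : -(L * ((m:ℝ) * μ + m * t)) + (m:ℝ) * (L * μ + L ^ 2 * c ^ 2 / 8)
        = -2 * m * t ^ 2 / c ^ 2 := by
      rw [hLdef]
      field_simp
      ring
    calc (((Finset.univ : Finset (Fin m ↪ Fin M)).filter
        (fun σ => (m : ℝ) * μ + m * t ≤ ∑ i, x (σ i))).card : ℝ)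
        ≤ Real.exp (-(L * ((m:ℝ) * μ + m * t))) * ∑ σ : Fin m ↪ Fin M, ∏ i, a (σ i) := hTchain
      _ ≤ Real.exp (-(L * ((m:ℝ) * μ + m * t)))
          * (((Finset.univ : Finset (Fin m ↪ Fin M)).card : ℝ) * ((∑ j, a j) / M) ^ m) :=
          mul_le_mul_of_nonneg_left hmac (Real.exp_pos _).le
      _ ≤ Real.exp (-(L * ((m:ℝ) * μ + m * t)))
          * (((Finset.univ : Finset (Fin m ↪ Fin M)).card : ℝ)
            * Real.exp ((m:ℝ) * (L * μ + L ^ 2 * c ^ 2 / 8))) := by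
          apply mul_le_mul_of_nonneg_left _ (Real.exp_pos _).le
          apply mul_le_mul_of_nonneg_left _ hNr.le
          rw [← hexp]
          exact hpow
      _ = ((Finset.univ : Finset (Fin m ↪ Fin M)).card : ℝ)
          * Real.exp (-2 * m * t ^ 2 / (y1 - y0) ^ 2) := by
          rw [← hcdef, ← hE, Real.exp_add]
          ring
  rw [div_le_iff₀ hNr]
  calc _ ≤ _ := hfinal
    _ = Real.exp (-2 * m * t ^ 2 / (y1 - y0) ^ 2)
        * ((Finset.univ : Finset (Fin m ↪ Fin M)).card : ℝ) := by ring
end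

section
/- Fix k ≥ 2 and 0 < d < 1. The probability that some letter a_i (or its inverse) appears at least twice in some relator, when (2n-1)^{kd} relators are chosen and each relator is a cyclically reduced word of length k over {a_1^{±1},...,a_n^{±1}}, is at most k(k-1)·2n·(2n-1)^{dk}/(2n-2)², which tends to 0 as n → ∞ when d < 1/k. -/
open scoped Classical

def invLetter {n : ℕ} (x : Fin n × Bool) : Fin n × Bool := (x.1, !x.2)

def CyclicallyReduced {n k : ℕ} (w : Fin k → Fin n × Bool) : Prop :=
  (∀ i : ℕ, ∀ h : i + 1 < k, w ⟨i + 1, h⟩ ≠ invLetter (w ⟨i, by omega⟩)) ∧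
  (∀ h : 0 < k, w ⟨0, h⟩ ≠ invLetter (w ⟨k - 1, by omega⟩))

lemma invLetter_invLetter {n : ℕ} (x : Fin n × Bool) : invLetter (invLetter x) = x := by
  simp [invLetter]

lemma fin_add_one_val {k : ℕ} [NeZero k] (p : Fin k) :
    (p + 1 : Fin k).val = if p.val + 1 = k then 0 else p.val + 1 := by
  have h0 : (p + 1 : Fin k).val = (p.val + (1 : Fin k).val) % k := by rw [Fin.add_def]
  have h1 : (1 : Fin k).val = 1 % k := Fin.val_one' k
  have h2 : (p.val + 1 % k) % k = (p.val + 1) % k := by rw [Nat.add_mod_mod]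
  rw [h0, h1, h2]
  have := p.isLt
  rcases eq_or_ne (p.val + 1) k with h | h
  · simp [h]
  · rw [if_neg h, Nat.mod_eq_of_lt (by omega)]

lemma cyc_iff {n k : ℕ} [NeZero k] (w : Fin k → Fin n × Bool) :
    CyclicallyReduced w ↔ ∀ p : Fin k, w (p + 1) ≠ invLetter (w p) := by
  have hk : 0 < k := Nat.pos_of_ne_zero (NeZero.ne k)
  constructor
  · rintro ⟨h1, h2⟩ p
    rcases Nat.lt_or_ge (p.val + 1) k with h | h
    · have e1 : (p + 1 : Fin k) = ⟨p.val + 1, h⟩ := by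
        apply Fin.ext; rw [fin_add_one_val]; simp; omega
      rw [e1]; exact h1 p.val h
    · have hp : p.val + 1 = k := by have := p.isLt; omega
      have e1 : (p + 1 : Fin k) = ⟨0, hk⟩ := by
        apply Fin.ext; rw [fin_add_one_val]; simp [hp]
      have e2 : p = ⟨k - 1, by omega⟩ := by apply Fin.ext; simp; omega
      rw [e1, e2]; exact h2 hk
  · intro h
    constructor
    · intro i hi
      have := h ⟨i, by omega⟩
      have e1 : (⟨i, by omega⟩ + 1 : Fin k) = ⟨i + 1, hi⟩ := by
        apply Fin.ext; rw [fin_add_one_val]; simp; omega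
      rwa [e1] at this
    · intro _
      have := h ⟨k - 1, by omega⟩
      have e1 : (⟨k - 1, by omega⟩ + 1 : Fin k) = ⟨0, hk⟩ := by
        apply Fin.ext; rw [fin_add_one_val]; simp; omega
      rwa [e1] at this

lemma update_cyc {n k : ℕ} (hk : 2 ≤ k) (w : Fin k → Fin n × Bool)
    (hw : ∀ q : Fin k, haveI : NeZero k := ⟨by omega⟩; w (q + 1) ≠ invLetter (w q))
    (p : Fin k) (x : Fin n × Bool)
    (hx1 : haveI : NeZero k := ⟨by omega⟩; x ≠ invLetter (w (p - 1)))
    (hx2 : haveI : NeZero k := ⟨by omega⟩; x ≠ invLetter (w (p + 1))) :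
    ∀ q : Fin k, haveI : NeZero k := ⟨by omega⟩;
      (Function.update w p x) (q + 1) ≠ invLetter ((Function.update w p x) q) := by
  haveI : NeZero k := ⟨by omega⟩
  intro q
  by_cases hq1 : q = p
  · by_cases hq2 : q + 1 = p
    · exfalso
      rw [hq1] at hq2
      have : (1 : Fin k) = 0 := by
        have := add_right_cancel (a := (1:Fin k)) (b := p) (c := (0:Fin k)) (by
          rw [add_comm, zero_add]; exact hq2)
        simpa using this
      have h1 : (1 : Fin k).val = 1 % k := Fin.val_one' k
      rw [this] at h1
      simp at h1
      omega
    · rw [Function.update_of_ne hq2, hq1, Function.update_self]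
      intro hcon
      apply hx2
      rw [hcon, invLetter_invLetter]
  · by_cases hq2 : q + 1 = p
    · have hq : q = p - 1 := eq_sub_of_add_eq hq2
      rw [hq2, Function.update_self, Function.update_of_ne hq1, hq]
      exact hx1
    · rw [Function.update_of_ne hq2, Function.update_of_ne hq1]
      exact hw q

def forbid {n k : ℕ} [NeZero k] (w : Fin k → Fin n × Bool) (p : Fin k) :
    Finset (Fin n × Bool) := {invLetter (w (p - 1)), invLetter (w (p + 1))}

lemma allowed_card {n k : ℕ} [NeZero k] (w : Fin k → Fin n × Bool) (p : Fin k) :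
    2 * n - 2 ≤ ((forbid w p)ᶜ : Finset (Fin n × Bool)).card := by
  have h1 : ((forbid w p)ᶜ : Finset (Fin n × Bool)).card
      = Fintype.card (Fin n × Bool) - (forbid w p).card := Finset.card_compl _
  have h2 : (forbid w p).card ≤ 2 := by
    apply le_trans (Finset.card_insert_le _ _); simp
  have h3 : Fintype.card (Fin n × Bool) = 2 * n := by simp [mul_comm]
  omega

noncomputable def enum {n k : ℕ} [NeZero k] (w : Fin k → Fin n × Bool) (p : Fin k)
    (e : Fin (2 * n - 2)) : Fin n × Bool :=
  (((forbid w p)ᶜ : Finset (Fin n × Bool)).equivFin.symm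
    ⟨e.val, lt_of_lt_of_le e.isLt (allowed_card w p)⟩ : _)

lemma enum_mem {n k : ℕ} [NeZero k] (w : Fin k → Fin n × Bool) (p : Fin k)
    (e : Fin (2 * n - 2)) : enum w p e ∉ forbid w p := by
  have := (((forbid w p)ᶜ : Finset (Fin n × Bool)).equivFin.symm
    ⟨e.val, lt_of_lt_of_le e.isLt (allowed_card w p)⟩).2
  rw [Finset.mem_compl] at this
  exact this

lemma enum_inj {n k : ℕ} [NeZero k] (w : Fin k → Fin n × Bool) (p : Fin k) :
    Function.Injective (enum w p) := by
  intro e1 e2 h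
  have := Subtype.coe_injective h
  have h2 := ((forbid w p)ᶜ : Finset (Fin n × Bool)).equivFin.symm.injective this
  have h3 : e1.val = e2.val := by injection h2
  exact Fin.ext h3

lemma update_enum_cyc {n k : ℕ} (hk : 2 ≤ k) (w : Fin k → Fin n × Bool)
    (hw : CyclicallyReduced w) (p : Fin k)
    (e : haveI : NeZero k := ⟨by omega⟩; Fin (2 * n - 2)) :
    haveI : NeZero k := ⟨by omega⟩;
    CyclicallyReduced (Function.update w p (enum w p e)) := by
  haveI : NeZero k := ⟨by omega⟩
  rw [cyc_iff]
  have hmem := enum_mem w p e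
  rw [forbid, Finset.mem_insert, Finset.mem_singleton] at hmem
  push_neg at hmem
  exact update_cyc hk w ((cyc_iff w).mp hw) p _ hmem.1 hmem.2

lemma class_count {n k : ℕ} (hk : 2 ≤ k) (i j : Fin k) (hij : i ≠ j)
    (a : Fin n) (s t : Bool) :
    ((Finset.univ : Finset (Fin k → Fin n × Bool)).filter
        (fun w => CyclicallyReduced w ∧ w i = (a, s) ∧ w j = (a, t))).card * (2 * n - 2) ^ 2 ≤
      ((Finset.univ : Finset (Fin k → Fin n × Bool)).filter
        (fun w => CyclicallyReduced w)).card := by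
  haveI : NeZero k := ⟨by omega⟩
  classical
  set T := (Finset.univ : Finset (Fin k → Fin n × Bool)).filter
      (fun w => CyclicallyReduced w ∧ w i = (a, s) ∧ w j = (a, t)) with hT
  set S := (Finset.univ : Finset (Fin k → Fin n × Bool)).filter
      (fun w => CyclicallyReduced w) with hS
  set D := T ×ˢ (Finset.univ : Finset (Fin (2 * n - 2) × Fin (2 * n - 2))) with hD
  let g : (Fin k → Fin n × Bool) × (Fin (2 * n - 2) × Fin (2 * n - 2)) →
      (Fin k → Fin n × Bool) := fun z =>
    Function.update (Function.update z.1 i (enum z.1 i z.2.1)) j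
      (enum (Function.update z.1 i (enum z.1 i z.2.1)) j z.2.2)
  have hmaps : ∀ z ∈ D, g z ∈ S := by
    rintro ⟨w, e1, e2⟩ hz
    rw [hD, Finset.mem_product] at hz
    rw [hT, Finset.mem_filter] at hz
    have hw : CyclicallyReduced w := hz.1.2.1
    rw [hS, Finset.mem_filter]
    refine ⟨Finset.mem_univ _, ?_⟩
    exact update_enum_cyc hk _ (update_enum_cyc hk w hw i e1) j e2
  have hinj : Set.InjOn g D := by
    rintro ⟨w, e1, e2⟩ hz ⟨w', e1', e2'⟩ hz' heq
    have hz1 : (w, e1, e2) ∈ D := hz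
    have hz1' : (w', e1', e2') ∈ D := hz'
    rw [hD, Finset.mem_product, hT, Finset.mem_filter] at hz1 hz1'
    have hwi : w i = (a, s) := hz1.1.2.2.1
    have hwj : w j = (a, t) := hz1.1.2.2.2
    have hwi' : w' i = (a, s) := hz1'.1.2.2.1
    have hwj' : w' j = (a, t) := hz1'.1.2.2.2
    have hww : w = w' := by
      funext p
      by_cases hpi : p = i
      · rw [hpi, hwi, hwi']
      · by_cases hpj : p = j
        · rw [hpj, hwj, hwj']
        · have h1 : g (w, e1, e2) p = w p := by
            simp only [g, Function.update_of_ne hpj, Function.update_of_ne hpi]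
          have h2 : g (w', e1', e2') p = w' p := by
            simp only [g, Function.update_of_ne hpj, Function.update_of_ne hpi]
          rw [← h1, ← h2, heq]
    subst hww
    have hji : i ≠ j := hij
    have hui : g (w, e1, e2) i = enum w i e1 := by
      simp only [g, Function.update_of_ne hji, Function.update_self]
    have hui' : g (w, e1', e2') i = enum w i e1' := by
      simp only [g, Function.update_of_ne hji, Function.update_self]
    have he1 : e1 = e1' := by
      apply enum_inj w i
      rw [← hui, ← hui', heq]
    subst he1
    have huj : g (w, e1, e2) j = enum (Function.update w i (enum w i e1)) j e2 := by
      simp only [g, Function.update_self]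
    have huj' : g (w, e1, e2') j = enum (Function.update w i (enum w i e1)) j e2' := by
      simp only [g, Function.update_self]
    have he2 : e2 = e2' := by
      apply enum_inj (Function.update w i (enum w i e1)) j
      rw [← huj, ← huj', heq]
    subst he2
    rfl
  have hcard := Finset.card_le_card_of_injOn g hmaps hinj
  rw [hD, Finset.card_product] at hcard
  have : (Finset.univ : Finset (Fin (2 * n - 2) × Fin (2 * n - 2))).card
      = (2 * n - 2) ^ 2 := by
    simp [Finset.card_univ, sq]
  rw [this] at hcard
  exact hcard

lemma pairs_card {k : ℕ} :
    2 * ((Finset.univ : Finset (Fin k × Fin k)).filter (fun p => p.1 < p.2)).card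
      ≤ k * (k - 1) := by
  classical
  set Plt := (Finset.univ : Finset (Fin k × Fin k)).filter (fun p => p.1 < p.2) with hPlt
  set Pgt := (Finset.univ : Finset (Fin k × Fin k)).filter (fun p => p.2 < p.1) with hPgt
  have hcards : Plt.card = Pgt.card := by
    refine Finset.card_bij' (fun p _ => (p.2, p.1)) (fun p _ => (p.2, p.1)) ?_ ?_ ?_ ?_ <;>
      intro p hp <;>
      simp only [hPlt, hPgt, Finset.mem_filter, Finset.mem_univ, true_and] at hp ⊢ <;>
      first | exact hp | rfl
  have hdisj : Disjoint Plt Pgt := by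
    rw [Finset.disjoint_left]
    intro p hp hp'
    rw [hPlt, Finset.mem_filter] at hp
    rw [hPgt, Finset.mem_filter] at hp'
    exact absurd hp.2 (not_lt.mpr (le_of_lt hp'.2))
  have hsub : Plt ∪ Pgt ⊆ (Finset.univ : Finset (Fin k)).offDiag := by
    intro p hp
    rw [Finset.mem_union] at hp
    rw [Finset.mem_offDiag]
    rcases hp with hp | hp
    · rw [hPlt, Finset.mem_filter] at hp
      exact ⟨Finset.mem_univ _, Finset.mem_univ _, ne_of_lt hp.2⟩
    · rw [hPgt, Finset.mem_filter] at hp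
      exact ⟨Finset.mem_univ _, Finset.mem_univ _, (ne_of_lt hp.2).symm⟩
  have h1 : Plt.card + Pgt.card ≤ (Finset.univ : Finset (Fin k)).offDiag.card := by
    rw [← Finset.card_union_of_disjoint hdisj]
    exact Finset.card_le_card hsub
  have h2 : (Finset.univ : Finset (Fin k)).offDiag.card = k * k - k := by
    rw [Finset.offDiag_card]; simp
  have h3 : k * (k - 1) = k * k - k := by
    rcases k with _ | m
    · simp
    · simp [Nat.succ_sub_one, Nat.mul_succ, Nat.succ_mul]
  omega

lemma bad_count {n k : ℕ} (hk : 2 ≤ k) :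
    2 * (((Finset.univ : Finset (Fin k → Fin n × Bool)).filter
        (fun w => CyclicallyReduced w ∧ ∃ i j : Fin k, i ≠ j ∧ (w i).1 = (w j).1)).card
      * (2 * n - 2) ^ 2)
    ≤ (k * (k - 1)) * (4 * n) *
      ((Finset.univ : Finset (Fin k → Fin n × Bool)).filter
        (fun w => CyclicallyReduced w)).card := by
  classical
  set S := (Finset.univ : Finset (Fin k → Fin n × Bool)).filter
      (fun w => CyclicallyReduced w) with hS
  set Bad := (Finset.univ : Finset (Fin k → Fin n × Bool)).filter
      (fun w => CyclicallyReduced w ∧ ∃ i j : Fin k, i ≠ j ∧ (w i).1 = (w j).1) with hBad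
  set I := ((Finset.univ : Finset (Fin k × Fin k)).filter (fun p => p.1 < p.2)) ×ˢ
      (Finset.univ : Finset (Fin n × Bool × Bool)) with hI
  set f : (Fin k × Fin k) × Fin n × Bool × Bool → Finset (Fin k → Fin n × Bool) :=
    fun c => (Finset.univ : Finset (Fin k → Fin n × Bool)).filter
      (fun w => CyclicallyReduced w ∧ w c.1.1 = (c.2.1, c.2.2.1) ∧ w c.1.2 = (c.2.1, c.2.2.2))
    with hf
  have hsub : Bad ⊆ I.biUnion f := by
    intro w hw
    rw [hBad, Finset.mem_filter] at hw
    obtain ⟨-, hcyc, i, j, hij, hl⟩ := hw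
    rcases lt_or_gt_of_ne hij with hlt | hlt
    · refine Finset.mem_biUnion.mpr ⟨((i, j), ((w i).1, (w i).2, (w j).2)), ?_, ?_⟩
      · rw [hI, Finset.mem_product, Finset.mem_filter]
        exact ⟨⟨Finset.mem_univ _, hlt⟩, Finset.mem_univ _⟩
      · rw [hf, Finset.mem_filter]
        refine ⟨Finset.mem_univ _, hcyc, rfl, ?_⟩
        show w j = ((w i).1, (w j).2)
        rw [hl]
    · refine Finset.mem_biUnion.mpr ⟨((j, i), ((w j).1, (w j).2, (w i).2)), ?_, ?_⟩
      · rw [hI, Finset.mem_product, Finset.mem_filter]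
        exact ⟨⟨Finset.mem_univ _, hlt⟩, Finset.mem_univ _⟩
      · rw [hf, Finset.mem_filter]
        refine ⟨Finset.mem_univ _, hcyc, rfl, ?_⟩
        show w i = ((w j).1, (w i).2)
        rw [← hl]
  have h1 : Bad.card ≤ ∑ c ∈ I, (f c).card :=
    le_trans (Finset.card_le_card hsub) (Finset.card_biUnion_le)
  have h2 : ∑ c ∈ I, (f c).card * (2 * n - 2) ^ 2 ≤ ∑ _c ∈ I, S.card := by
    apply Finset.sum_le_sum
    rintro ⟨⟨i, j⟩, a, s, t⟩ hc
    rw [hI, Finset.mem_product, Finset.mem_filter] at hc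
    exact class_count hk i j (ne_of_lt hc.1.2) a s t
  have h3 : Bad.card * (2 * n - 2) ^ 2 ≤ I.card * S.card := by
    calc Bad.card * (2 * n - 2) ^ 2 ≤ (∑ c ∈ I, (f c).card) * (2 * n - 2) ^ 2 :=
          Nat.mul_le_mul_right _ h1
      _ = ∑ c ∈ I, (f c).card * (2 * n - 2) ^ 2 := by rw [Finset.sum_mul]
      _ ≤ ∑ _c ∈ I, S.card := h2
      _ = I.card * S.card := by rw [Finset.sum_const, smul_eq_mul]
  have h4 : I.card = ((Finset.univ : Finset (Fin k × Fin k)).filter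
      (fun p => p.1 < p.2)).card * (4 * n) := by
    rw [hI, Finset.card_product]
    congr 1
    simp [Finset.card_univ]
    ring
  calc 2 * (Bad.card * (2 * n - 2) ^ 2) ≤ 2 * (I.card * S.card) :=
        Nat.mul_le_mul_left _ h3
    _ = (2 * ((Finset.univ : Finset (Fin k × Fin k)).filter
          (fun p => p.1 < p.2)).card) * ((4 * n) * S.card) := by rw [h4]; ring
    _ ≤ (k * (k - 1)) * ((4 * n) * S.card) :=
        Nat.mul_le_mul_right _ pairs_card
    _ = (k * (k - 1)) * (4 * n) * S.card := by ring

lemma mem_powersetCard_count {α : Type*} [DecidableEq α] (S : Finset α) (b : α) (hb : b ∈ S)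
    (m : ℕ) (hm : 1 ≤ m) :
    ((S.powersetCard m).filter (fun R => b ∈ R)).card = Nat.choose (S.card - 1) (m - 1) := by
  have key : ((S.powersetCard m).filter (fun R => b ∈ R)).card
      = ((S.erase b).powersetCard (m - 1)).card := by
    refine Finset.card_bij' (fun R _ => R.erase b) (fun T _ => insert b T) ?_ ?_ ?_ ?_
    · intro R hR
      rw [Finset.mem_filter, Finset.mem_powersetCard] at hR
      rw [Finset.mem_powersetCard]
      exact ⟨Finset.erase_subset_erase _ hR.1.1, by rw [Finset.card_erase_of_mem hR.2, hR.1.2]⟩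
    · intro T hT
      rw [Finset.mem_powersetCard] at hT
      have hbT : b ∉ T := fun h => Finset.notMem_erase b S (hT.1 h)
      rw [Finset.mem_filter, Finset.mem_powersetCard]
      refine ⟨⟨?_, ?_⟩, Finset.mem_insert_self _ _⟩
      · intro x hx
        rcases Finset.mem_insert.mp hx with rfl | hx
        · exact hb
        · exact Finset.erase_subset _ _ (hT.1 hx)
      · rw [Finset.card_insert_of_notMem hbT, hT.2]; omega
    · intro R hR
      rw [Finset.mem_filter] at hR
      exact Finset.insert_erase hR.2
    · intro T hT
      rw [Finset.mem_powersetCard] at hT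
      exact Finset.erase_insert (fun h => Finset.notMem_erase b S (hT.1 h))
  rw [key, Finset.card_powersetCard, Finset.card_erase_of_mem hb]

lemma numerator_bound {n k : ℕ} (m : ℕ) (hm : 1 ≤ m) :
    letI S := (Finset.univ : Finset (Fin k → Fin n × Bool)).filter
      (fun w => CyclicallyReduced w)
    ((S.powersetCard m).filter
        (fun R => ∃ w ∈ R, ∃ i j : Fin k, i ≠ j ∧ (w i).1 = (w j).1)).card * S.card
      ≤ ((Finset.univ : Finset (Fin k → Fin n × Bool)).filter
          (fun w => CyclicallyReduced w ∧ ∃ i j : Fin k, i ≠ j ∧ (w i).1 = (w j).1)).card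
        * m * (S.powersetCard m).card := by
  classical
  set S := (Finset.univ : Finset (Fin k → Fin n × Bool)).filter
      (fun w => CyclicallyReduced w) with hS
  set Bad := (Finset.univ : Finset (Fin k → Fin n × Bool)).filter
      (fun w => CyclicallyReduced w ∧ ∃ i j : Fin k, i ≠ j ∧ (w i).1 = (w j).1) with hBad
  set P := S.powersetCard m with hP
  set N := P.filter (fun R => ∃ w ∈ R, ∃ i j : Fin k, i ≠ j ∧ (w i).1 = (w j).1) with hN
  rcases Nat.eq_zero_or_pos S.card with hs | hs
  · rw [hs, Nat.mul_zero]; exact Nat.zero_le _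
  have hBadS : Bad ⊆ S := by
    intro b hb
    rw [hBad, Finset.mem_filter] at hb
    rw [hS, Finset.mem_filter]
    exact ⟨hb.1, hb.2.1⟩
  have hsub : N ⊆ Bad.biUnion (fun b => P.filter (fun R => b ∈ R)) := by
    intro R hR
    rw [hN, Finset.mem_filter] at hR
    obtain ⟨hRP, w, hwR, hwbad⟩ := hR
    have hRS : R ⊆ S := (Finset.mem_powersetCard.mp hRP).1
    have hwS := hRS hwR
    rw [hS, Finset.mem_filter] at hwS
    refine Finset.mem_biUnion.mpr ⟨w, ?_, ?_⟩
    · rw [hBad, Finset.mem_filter]; exact ⟨Finset.mem_univ _, hwS.2, hwbad⟩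
    · rw [Finset.mem_filter]; exact ⟨hRP, hwR⟩
  have h1 : N.card ≤ Bad.card * Nat.choose (S.card - 1) (m - 1) := by
    calc N.card ≤ ∑ b ∈ Bad, (P.filter (fun R => b ∈ R)).card :=
          le_trans (Finset.card_le_card hsub) Finset.card_biUnion_le
      _ = ∑ b ∈ Bad, Nat.choose (S.card - 1) (m - 1) := by
          apply Finset.sum_congr rfl
          intro b hb
          exact mem_powersetCard_count S b (hBadS hb) m hm
      _ = Bad.card * Nat.choose (S.card - 1) (m - 1) := by
          rw [Finset.sum_const, smul_eq_mul]
  have hid : Nat.choose (S.card - 1) (m - 1) * S.card = Nat.choose S.card m * m := by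
    have h := Nat.add_one_mul_choose_eq (S.card - 1) (m - 1)
    have e1 : S.card - 1 + 1 = S.card := by omega
    have e2 : m - 1 + 1 = m := by omega
    rw [e1, e2] at h
    rw [Nat.mul_comm]
    exact h
  have hPcard : P.card = Nat.choose S.card m := Finset.card_powersetCard m S
  calc N.card * S.card ≤ Bad.card * Nat.choose (S.card - 1) (m - 1) * S.card :=
        Nat.mul_le_mul_right _ h1
    _ = Bad.card * (Nat.choose (S.card - 1) (m - 1) * S.card) := by ring
    _ = Bad.card * (Nat.choose S.card m * m) := by rw [hid]
    _ = Bad.card * m * P.card := by rw [hPcard]; ring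

lemma S_card_pos {n k : ℕ} (hn : 1 ≤ n) :
    1 ≤ ((Finset.univ : Finset (Fin k → Fin n × Bool)).filter
      (fun w => CyclicallyReduced w)).card := by
  classical
  rw [Nat.one_le_iff_ne_zero, ← Nat.pos_iff_ne_zero, Finset.card_pos]
  refine ⟨fun _ => ((⟨0, by omega⟩ : Fin n), true), ?_⟩
  rw [Finset.mem_filter]
  refine ⟨Finset.mem_univ _, ?_, ?_⟩
  · intro i h hcon
    simp [invLetter] at hcon
  · intro h hcon
    simp [invLetter] at hcon

/-- The probability that, choosing uniformly a set of `⌊(2n-1)^{kd}⌋` distinct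
cyclically reduced words of length `k` over `{a_1^{±1},...,a_n^{±1}}`, some relator
contains a generator (or its inverse) at least twice. -/
noncomputable def repeatedLetterProb (k n : ℕ) (d : ℝ) : ℝ :=
  (((((Finset.univ : Finset (Fin k → Fin n × Bool)).filter
        (fun w => CyclicallyReduced w)).powersetCard
          ⌊(2 * (n : ℝ) - 1) ^ ((k : ℝ) * d)⌋₊).filter
      (fun R => ∃ w ∈ R, ∃ i j : Fin k, i ≠ j ∧ (w i).1 = (w j).1)).card : ℝ) /
    ((((Finset.univ : Finset (Fin k → Fin n × Bool)).filter
        (fun w => CyclicallyReduced w)).powersetCard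
          ⌊(2 * (n : ℝ) - 1) ^ ((k : ℝ) * d)⌋₊).card : ℝ)

set_option maxHeartbeats 2000000 in
/-- The probability that some letter appears at least twice in some relator is at most
`k(k-1)·2n·(2n-1)^{dk}/(2n-2)²`, and this bound tends to `0` as `n → ∞` when `d < 1/k`. -/
theorem repeated_letter_prob_bound (k : ℕ) (hk : 2 ≤ k) (d : ℝ) (hd0 : 0 < d) (hd1 : d < 1) :
    (∀ n : ℕ, 2 ≤ n →
      repeatedLetterProb k n d ≤
        (k : ℝ) * ((k : ℝ) - 1) * (2 * (n : ℝ)) * (2 * (n : ℝ) - 1) ^ (d * (k : ℝ)) /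
          (2 * (n : ℝ) - 2) ^ 2) ∧
    (d < 1 / (k : ℝ) → Filter.Tendsto
      (fun n : ℕ =>
        (k : ℝ) * ((k : ℝ) - 1) * (2 * (n : ℝ)) * (2 * (n : ℝ) - 1) ^ (d * (k : ℝ)) /
          (2 * (n : ℝ) - 2) ^ 2)
      Filter.atTop (nhds 0)) := by
  constructor
  · intro n hn
    classical
    set S := (Finset.univ : Finset (Fin k → Fin n × Bool)).filter
        (fun w => CyclicallyReduced w) with hS
    set m := ⌊(2 * (n : ℝ) - 1) ^ ((k : ℝ) * d)⌋₊ with hm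
    set P := S.powersetCard m with hP
    set N := P.filter (fun R => ∃ w ∈ R, ∃ i j : Fin k, i ≠ j ∧ (w i).1 = (w j).1) with hN
    set Bad := (Finset.univ : Finset (Fin k → Fin n × Bool)).filter
        (fun w => CyclicallyReduced w ∧ ∃ i j : Fin k, i ≠ j ∧ (w i).1 = (w j).1) with hBad
    have hprob : repeatedLetterProb k n d = (N.card : ℝ) / (P.card : ℝ) := rfl
    -- basic positivity facts
    have hnn1 : (2 : ℝ) * n - 1 ≥ 1 := by
      have : (2 : ℝ) ≤ (n : ℝ) := by exact_mod_cast hn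
      linarith
    have hm1 : 1 ≤ m := by
      rw [hm]
      apply Nat.le_floor
      push_cast
      calc (1 : ℝ) = (2 * (n : ℝ) - 1) ^ (0 : ℝ) := by rw [Real.rpow_zero]
        _ ≤ (2 * (n : ℝ) - 1) ^ ((k : ℝ) * d) := by
            apply Real.rpow_le_rpow_of_exponent_le hnn1
            positivity
    have hs1 : 1 ≤ S.card := S_card_pos (by omega)
    have hX : (0 : ℝ) < (2 * (n : ℝ) - 2) ^ 2 := by
      have : (2 : ℝ) ≤ (n : ℝ) := by exact_mod_cast hn
      have : (0:ℝ) < 2 * (n:ℝ) - 2 := by linarith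
      positivity
    have hRHSnonneg : (0:ℝ) ≤
        (k : ℝ) * ((k : ℝ) - 1) * (2 * (n : ℝ)) * (2 * (n : ℝ) - 1) ^ (d * (k : ℝ)) /
          (2 * (n : ℝ) - 2) ^ 2 := by
      have hk1 : (1:ℝ) ≤ (k:ℝ) := by exact_mod_cast (by omega : 1 ≤ k)
      have h1 : (0:ℝ) ≤ (2 * (n : ℝ) - 1) ^ (d * (k : ℝ)) :=
        Real.rpow_nonneg (by linarith) _
      have h2 : (0:ℝ) ≤ (n:ℝ) := Nat.cast_nonneg n
      apply div_nonneg _ (le_of_lt hX)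
      have h3 : (0:ℝ) ≤ (k:ℝ) - 1 := by linarith
      exact mul_nonneg (mul_nonneg (mul_nonneg (by linarith) h3) (by linarith)) h1
    rcases Nat.eq_zero_or_pos P.card with hPc | hPc
    · have hN0 : N.card = 0 := by
        have hle : N.card ≤ P.card := Finset.card_le_card (by rw [hN]; exact Finset.filter_subset _ _)
        omega
      rw [hprob, hN0]
      simpa using hRHSnonneg
    -- main case
    have hnum := numerator_bound (n := n) (k := k) m hm1
    have hbad := bad_count (n := n) (k := k) hk
    -- cast to ℝ
    have hnumR : (N.card : ℝ) * (S.card : ℝ) ≤ (Bad.card : ℝ) * m * (P.card : ℝ) := by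
      exact_mod_cast hnum
    have hcast1 : ((2 * n - 2 : ℕ) : ℝ) = 2 * (n : ℝ) - 2 := by
      rw [Nat.cast_sub (by linarith : 2 ≤ 2 * n)]
      push_cast
      ring
    have hcast2 : ((k - 1 : ℕ) : ℝ) = (k : ℝ) - 1 := by
      rw [Nat.cast_sub (le_trans one_le_two hk)]
      push_cast
      ring
    have hbadR : 2 * ((Bad.card : ℝ) * (2 * (n:ℝ) - 2) ^ 2)
        ≤ (k : ℝ) * ((k : ℝ) - 1) * (4 * (n:ℝ)) * (S.card : ℝ) := by
      have h2 := (Nat.cast_le (α := ℝ)).mpr hbad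
      rw [← hBad, ← hS] at h2
      push_cast [hcast1, hcast2] at h2
      linarith [h2]
    have hmR : (m : ℝ) ≤ (2 * (n : ℝ) - 1) ^ (d * (k : ℝ)) := by
      rw [mul_comm d (k:ℝ)]
      exact Nat.floor_le (Real.rpow_nonneg (by linarith) _)
    -- combine
    rw [hprob]
    rw [div_le_div_iff₀ (by exact_mod_cast hPc) hX]
    have hsR : (1:ℝ) ≤ (S.card : ℝ) := by exact_mod_cast hs1
    have hmRpos : (1:ℝ) ≤ (m : ℝ) := by exact_mod_cast hm1
    have hPR : (0:ℝ) < (P.card : ℝ) := by exact_mod_cast hPc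
    have hBR : (0:ℝ) ≤ (Bad.card : ℝ) := Nat.cast_nonneg _
    have hNR : (0:ℝ) ≤ (N.card : ℝ) := Nat.cast_nonneg _
    have hRpos : (0:ℝ) < (2 * (n : ℝ) - 1) ^ (d * (k : ℝ)) :=
      Real.rpow_pos_of_pos (by linarith) _
    -- N * X * s ≤ K*2n*R*C*s then cancel s
    have key : (N.card : ℝ) * (2 * (n:ℝ) - 2) ^ 2 * (S.card : ℝ)
        ≤ (k : ℝ) * ((k : ℝ) - 1) * (2 * (n : ℝ)) * (2 * (n : ℝ) - 1) ^ (d * (k : ℝ))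
          * (P.card : ℝ) * (S.card : ℝ) := by
      calc (N.card : ℝ) * (2 * (n:ℝ) - 2) ^ 2 * (S.card : ℝ)
          = ((N.card : ℝ) * (S.card : ℝ)) * (2 * (n:ℝ) - 2) ^ 2 := by ring
        _ ≤ ((Bad.card : ℝ) * m * (P.card : ℝ)) * (2 * (n:ℝ) - 2) ^ 2 := by
            apply mul_le_mul_of_nonneg_right hnumR (le_of_lt hX)
        _ = (2 * ((Bad.card : ℝ) * (2 * (n:ℝ) - 2) ^ 2)) * ((m : ℝ) * (P.card : ℝ) / 2) := by
            ring
        _ ≤ ((k : ℝ) * ((k : ℝ) - 1) * (4 * (n:ℝ)) * (S.card : ℝ)) * ((m : ℝ) * (P.card : ℝ) / 2) := by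
            apply mul_le_mul_of_nonneg_right hbadR
            positivity
        _ = ((k : ℝ) * ((k : ℝ) - 1) * (2 * (n:ℝ)) * (m : ℝ)) * (P.card : ℝ) * (S.card : ℝ) := by
            ring
        _ ≤ ((k : ℝ) * ((k : ℝ) - 1) * (2 * (n:ℝ)) * ((2 * (n : ℝ) - 1) ^ (d * (k : ℝ)))) * (P.card : ℝ) * (S.card : ℝ) := by
            have hk1 : (1:ℝ) ≤ (k:ℝ) := by exact_mod_cast (le_trans one_le_two hk)
            have hfac : (0:ℝ) ≤ (k : ℝ) * ((k : ℝ) - 1) * (2 * (n:ℝ)) := by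
              have h2 : (0:ℝ) ≤ (n:ℝ) := Nat.cast_nonneg n
              nlinarith
            apply mul_le_mul_of_nonneg_right _ (le_of_lt (lt_of_lt_of_le zero_lt_one hsR))
            apply mul_le_mul_of_nonneg_right _ (le_of_lt hPR)
            exact mul_le_mul_of_nonneg_left hmR hfac
    exact le_of_mul_le_mul_right key (lt_of_lt_of_le zero_lt_one hsR)
  · intro hdk
    have hk2 : (2:ℝ) ≤ (k:ℝ) := by exact_mod_cast hk
    have hkpos : (0:ℝ) < (k:ℝ) := by linarith
    have hdk1 : d * (k:ℝ) < 1 := by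
      calc d * (k:ℝ) < (1 / (k:ℝ)) * (k:ℝ) := by
            apply mul_lt_mul_of_pos_right hdk hkpos
        _ = 1 := by field_simp
    have hdknn : 0 ≤ d * (k:ℝ) := by positivity
    set c := (k:ℝ) * ((k:ℝ) - 1) with hc
    have hcnn : 0 ≤ c := by rw [hc]; nlinarith
    -- limit of the comparison function
    have h2 : Filter.Tendsto (fun n : ℕ => 2 * (n:ℝ) - 2) Filter.atTop Filter.atTop := by
      have ha : Filter.Tendsto (fun n : ℕ => (n:ℝ)) Filter.atTop Filter.atTop :=
        tendsto_natCast_atTop_atTop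
      have hb := ha.const_mul_atTop (show (0:ℝ) < 2 by norm_num)
      simpa [sub_eq_add_neg] using Filter.tendsto_atTop_add_const_right Filter.atTop (-2 : ℝ) hb
    have h1 : Filter.Tendsto (fun x : ℝ => x ^ (d * (k:ℝ) - 1)) Filter.atTop (nhds 0) := by
      have := tendsto_rpow_neg_atTop (show (0:ℝ) < 1 - d * (k:ℝ) by linarith)
      simpa [neg_sub] using this
    have hg : Filter.Tendsto (fun n : ℕ => 4 * c * (2 * (n:ℝ) - 2) ^ (d * (k:ℝ) - 1))
        Filter.atTop (nhds 0) := by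
      have := (h1.comp h2).const_mul (4 * c)
      simpa using this
    -- squeeze
    apply tendsto_of_tendsto_of_tendsto_of_le_of_le' tendsto_const_nhds hg
    · -- 0 ≤ f n eventually
      filter_upwards [Filter.eventually_ge_atTop 2] with n hn
      have hnn : (2:ℝ) ≤ (n:ℝ) := by exact_mod_cast hn
      have hx : (0:ℝ) < 2 * (n:ℝ) - 2 := by linarith
      have hr : (0:ℝ) ≤ (2 * (n:ℝ) - 1) ^ (d * (k:ℝ)) := Real.rpow_nonneg (by linarith) _
      apply div_nonneg _ (by positivity)
      have : (0:ℝ) ≤ (k:ℝ) - 1 := by linarith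
      exact mul_nonneg (mul_nonneg (mul_nonneg (by linarith) this) (by linarith)) hr
    · -- f n ≤ g n eventually
      filter_upwards [Filter.eventually_ge_atTop 2] with n hn
      have hnn : (2:ℝ) ≤ (n:ℝ) := by exact_mod_cast hn
      have hx : (0:ℝ) < 2 * (n:ℝ) - 2 := by linarith
      have hX : (0:ℝ) < (2 * (n:ℝ) - 2) ^ 2 := by positivity
      rw [div_le_iff₀ hX]
      have hrw : (2 * (n:ℝ) - 2) ^ (d * (k:ℝ) - 1) * (2 * (n:ℝ) - 2) ^ 2
          = (2 * (n:ℝ) - 2) ^ (d * (k:ℝ)) * (2 * (n:ℝ) - 2) := by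
        rw [← Real.rpow_natCast (2 * (n:ℝ) - 2) 2, ← Real.rpow_add hx]
        rw [show d * (k:ℝ) - 1 + ((2:ℕ):ℝ) = d * (k:ℝ) + 1 by push_cast; ring]
        rw [Real.rpow_add hx, Real.rpow_one]
      have hpow : (2 * (n:ℝ) - 1) ^ (d * (k:ℝ)) ≤ 2 * (2 * (n:ℝ) - 2) ^ (d * (k:ℝ)) := by
        calc (2 * (n:ℝ) - 1) ^ (d * (k:ℝ))
            ≤ (2 * (2 * (n:ℝ) - 2)) ^ (d * (k:ℝ)) := by
              apply Real.rpow_le_rpow (by linarith) (by linarith) hdknn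
          _ = (2:ℝ) ^ (d * (k:ℝ)) * (2 * (n:ℝ) - 2) ^ (d * (k:ℝ)) := by
              rw [Real.mul_rpow (by norm_num) (le_of_lt hx)]
          _ ≤ 2 * (2 * (n:ℝ) - 2) ^ (d * (k:ℝ)) := by
              apply mul_le_mul_of_nonneg_right _ (Real.rpow_nonneg (le_of_lt hx) _)
              calc (2:ℝ) ^ (d * (k:ℝ)) ≤ (2:ℝ) ^ (1:ℝ) :=
                    Real.rpow_le_rpow_of_exponent_le (by norm_num) (le_of_lt hdk1)
                _ = 2 := Real.rpow_one 2
      have h2n : 2 * (n:ℝ) ≤ 2 * (2 * (n:ℝ) - 2) := by linarith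
      have hpnn : (0:ℝ) ≤ (2 * (n:ℝ) - 2) ^ (d * (k:ℝ)) := Real.rpow_nonneg (le_of_lt hx) _
      calc c * (2 * (n:ℝ)) * (2 * (n:ℝ) - 1) ^ (d * (k:ℝ))
          ≤ c * (2 * (n:ℝ)) * (2 * (2 * (n:ℝ) - 2) ^ (d * (k:ℝ))) := by
            apply mul_le_mul_of_nonneg_left hpow
            have : (0:ℝ) ≤ (k:ℝ) - 1 := by linarith
            rw [hc]; positivity
          _ = (2 * c * (2 * (n:ℝ) - 2) ^ (d * (k:ℝ))) * (2 * (n:ℝ)) := by ring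
          _ ≤ (2 * c * (2 * (n:ℝ) - 2) ^ (d * (k:ℝ))) * (2 * (2 * (n:ℝ) - 2)) := by
            apply mul_le_mul_of_nonneg_left h2n
            positivity
          _ = 4 * c * (2 * (n:ℝ) - 2) ^ (d * (k:ℝ)) * (2 * (n:ℝ) - 2) := by ring
          _ = 4 * c * ((2 * (n:ℝ) - 2) ^ (d * (k:ℝ) - 1) * (2 * (n:ℝ) - 2) ^ 2) := by
            rw [hrw]; ring
          _ = 4 * c * (2 * (n:ℝ) - 2) ^ (d * (k:ℝ) - 1) * (2 * (n:ℝ) - 2) ^ 2 := by ring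
end

section
/- Fix k ≥ 2 and 0 < d < 1/k, and let c = kd - 1 < 0. For the positive model: the number of ℓ-tuples of positive length-k words fulfilling a cyclic relator diagram with (k-1)ℓ edges is exactly n^{(k-1)ℓ}, the probability that any fixed ℓ-tuple of distinct positive words all lie in a uniformly random set R of ⌊n^{kd}⌋ positive words (out of n^k total) is less than n^{kℓ(d-1)}, and hence the probability that some ℓ-tuple in R fulfils the diagram is at most n^{(kd-1)ℓ}. -/
open scoped Classical

open Finset

theorem count_aux (n k ℓ : ℕ) (hk : 2 ≤ k) (hℓ : 2 ≤ ℓ) :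
    Nat.card {w : Fin ℓ → Fin k → Fin n //
        ∀ j : Fin ℓ, w (j + ⟨1, by omega⟩) ⟨0, by omega⟩ = w j ⟨k - 1, by omega⟩}
      = n ^ ((k - 1) * ℓ) := by
  haveI : NeZero ℓ := ⟨by omega⟩
  have e : {w : Fin ℓ → Fin k → Fin n //
        ∀ j : Fin ℓ, w (j + ⟨1, by omega⟩) ⟨0, by omega⟩ = w j ⟨k - 1, by omega⟩}
      ≃ (Fin ℓ → Fin (k - 1) → Fin n) :=
  { toFun := fun w j i => w.1 j ⟨i.1 + 1, by omega⟩
    invFun := fun f => ⟨fun j i =>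
      if h : i.1 = 0 then f (j - ⟨1, by omega⟩) ⟨k - 2, by omega⟩
      else f j ⟨i.1 - 1, by omega⟩, by
      intro j
      simp only
      rw [dif_pos trivial, dif_neg (show ¬(k - 1 = 0) by omega)]
      rw [add_sub_cancel_right j ⟨1, by omega⟩]
      exact congrArg _ (by apply Fin.ext; simp; omega : (⟨k-2, by omega⟩ : Fin (k-1)) = ⟨k-1-1, by omega⟩)⟩
    left_inv := by
      intro w
      apply Subtype.ext
      funext j i
      simp only
      by_cases h : i.1 = 0
      · rw [dif_pos h]
        have h2 : (⟨k - 2 + 1, by omega⟩ : Fin k) = ⟨k - 1, by omega⟩ := by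
          apply Fin.ext; simp; omega
        rw [h2, ← w.2 (j - ⟨1, by omega⟩)]
        have h3 : j - ⟨1, by omega⟩ + ⟨1, by omega⟩ = j := sub_add_cancel j ⟨1, by omega⟩
        rw [h3]
        exact congrArg (w.1 j) (by apply Fin.ext; simp [h.symm])
      · rw [dif_neg h]
        exact congrArg (w.1 j) (by apply Fin.ext; simp; omega)
    right_inv := by
      intro f
      funext j i
      simp only
      rw [dif_neg (show ¬(i.1 + 1 = 0) by omega)]
      exact congrArg (f j) (by apply Fin.ext; simp) }
  rw [Nat.card_congr e, Nat.card_eq_fintype_card, pow_mul]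
  simp

theorem prob_aux (n k ℓ : ℕ) (hn : 2 ≤ n) (hk : 2 ≤ k) (hℓ : 2 ≤ ℓ)
    (d : ℝ) (hd0 : 0 < d) (hd1 : d < 1 / (k : ℝ))
    (a : Finset (Fin k → Fin n)) (ha : a.card = ℓ) :
    ((((Finset.univ : Finset (Fin k → Fin n)).powersetCard
          ⌊(n : ℝ) ^ ((k : ℝ) * d)⌋₊).filter (fun R => a ⊆ R)).card : ℝ) /
        ((((Finset.univ : Finset (Fin k → Fin n)).powersetCard
          ⌊(n : ℝ) ^ ((k : ℝ) * d)⌋₊).card : ℝ))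
      < (n : ℝ) ^ ((k : ℝ) * (ℓ : ℝ) * (d - 1)) := by
  set E := ⌊(n : ℝ) ^ ((k : ℝ) * d)⌋₊ with hEdef
  set N := n ^ k with hNdef
  have hn0 : (0 : ℝ) < n := by positivity
  have hn1 : (1 : ℝ) < n := by exact_mod_cast hn
  have hkd1 : (k : ℝ) * d < 1 := by
    have hk0 : (0 : ℝ) < k := by positivity
    have h := mul_lt_mul_of_pos_left hd1 hk0
    rwa [mul_one_div, div_self (ne_of_gt hk0)] at h
  have hElt : (E : ℝ) ≤ (n : ℝ) ^ ((k : ℝ) * d) := Nat.floor_le (by positivity)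
  have hrlt : (n : ℝ) ^ ((k : ℝ) * d) < n := by
    calc (n : ℝ) ^ ((k : ℝ) * d) < (n : ℝ) ^ (1 : ℝ) :=
      (Real.rpow_lt_rpow_left_iff hn1).2 hkd1
    _ = n := Real.rpow_one _
  have hEn : E < n := by exact_mod_cast lt_of_le_of_lt hElt hrlt
  have hEN : E < N := lt_of_lt_of_le hEn (Nat.le_self_pow (by omega) n)
  have hcardU : (Finset.univ : Finset (Fin k → Fin n)).card = N := by
    simp [hNdef]
  have htotal : ((Finset.univ : Finset (Fin k → Fin n)).powersetCard E).card
      = N.choose E := by rw [Finset.card_powersetCard, hcardU]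
  have htotal_pos : 0 < N.choose E := Nat.choose_pos hEN.le
  have hrpos : (0 : ℝ) < (n : ℝ) ^ ((k : ℝ) * (ℓ : ℝ) * (d - 1)) :=
    Real.rpow_pos_of_pos hn0 _
  by_cases hcase : E < ℓ
  · have hempty : (((Finset.univ : Finset (Fin k → Fin n)).powersetCard E).filter
        (fun R => a ⊆ R)) = ∅ := by
      apply Finset.filter_eq_empty_iff.2
      intro R hR haR
      have hRc : R.card = E := (Finset.mem_powersetCard.1 hR).2
      have := Finset.card_le_card haR
      omega
    rw [hempty]
    simpa using hrpos
  · push_neg at hcase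
    set A := (N - ℓ).choose (E - ℓ) with hAdef
    have hfle : (((Finset.univ : Finset (Fin k → Fin n)).powersetCard E).filter
        (fun R => a ⊆ R)).card ≤ A := by
      have hinj := Finset.card_le_card_of_injOn (fun R => R \ a)
        (s := ((Finset.univ : Finset (Fin k → Fin n)).powersetCard E).filter
          (fun R => a ⊆ R))
        (t := ((Finset.univ : Finset (Fin k → Fin n)) \ a).powersetCard (E - ℓ))
        (by
          intro R hR
          rw [Finset.mem_coe, Finset.mem_filter, Finset.mem_powersetCard] at hR
          obtain ⟨⟨hRu, hRc⟩, haR⟩ := hR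
          rw [Finset.mem_coe, Finset.mem_powersetCard]
          constructor
          · exact Finset.sdiff_subset_sdiff hRu (le_refl a)
          · rw [Finset.card_sdiff_of_subset haR, hRc, ha])
        (by
          intro R1 h1 R2 h2 h12
          simp only [Finset.coe_filter, Set.mem_setOf_eq] at h1 h2
          have h12' : R1 \ a = R2 \ a := h12
          have e1 := Finset.sdiff_union_of_subset h1.2
          have e2 := Finset.sdiff_union_of_subset h2.2
          rw [← e1, ← e2, h12'])
      calc _ ≤ _ := hinj
      _ = A := by
        rw [Finset.card_powersetCard, Finset.card_sdiff_of_subset (Finset.subset_univ a),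
          hcardU, ha]
    have hdescN_pos : 0 < N.descFactorial ℓ :=
      Nat.pos_of_ne_zero (fun h =>
        absurd (Nat.descFactorial_eq_zero_iff_lt.1 h) (by omega))
    have hid : A * N.descFactorial ℓ = E.descFactorial ℓ * N.choose E := by
      have h := Nat.choose_mul (n := N) hcase
      rw [Nat.descFactorial_eq_factorial_mul_choose, Nat.descFactorial_eq_factorial_mul_choose]
      calc A * (ℓ.factorial * N.choose ℓ) = ℓ.factorial * (N.choose ℓ * A) := by ring
      _ = ℓ.factorial * (N.choose E * E.choose ℓ) := by rw [h]
      _ = ℓ.factorial * E.choose ℓ * N.choose E := by ring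
    have key : (A : ℝ) / (N.choose E : ℝ)
        = (E.descFactorial ℓ : ℝ) / (N.descFactorial ℓ : ℝ) := by
      rw [div_eq_div_iff (Nat.cast_ne_zero.2 htotal_pos.ne')
        (Nat.cast_ne_zero.2 hdescN_pos.ne')]
      exact_mod_cast hid
    set c := (n : ℝ) ^ ((k : ℝ) * (d - 1)) with hcdef
    have hNr : (N : ℝ) = (n : ℝ) ^ ((k : ℕ) : ℝ) := by
      rw [Real.rpow_natCast]; exact_mod_cast rfl
    have hENr : (E : ℝ) < (N : ℝ) := by exact_mod_cast hEN
    have hNE2 : 2 ≤ E := le_trans hℓ hcase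
    have hc2 : (n : ℝ) ^ ((k : ℝ) * d) / (n : ℝ) ^ ((k : ℕ) : ℝ) = c := by
      rw [← Real.rpow_sub hn0]; congr 1; ring
    have hENc : (E : ℝ) / (N : ℝ) ≤ c := by
      rw [hNr, ← hc2]
      exact (div_le_div_iff_of_pos_right (Real.rpow_pos_of_pos hn0 _)).2 hElt
    have hfacle : ∀ i : ℕ, i < ℓ → ((E - i : ℕ) : ℝ) / ((N - i : ℕ) : ℝ) ≤ c := by
      intro i hi
      have hiE : i ≤ E := le_trans (le_of_lt hi) hcase
      have hiN : i < N := lt_of_le_of_lt hiE hEN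
      have hir : (i : ℝ) < N := by exact_mod_cast hiN
      have hiE' : (i : ℝ) ≤ E := by exact_mod_cast hiE
      rw [Nat.cast_sub hiE, Nat.cast_sub hiN.le]
      refine le_trans ?_ hENc
      rw [div_le_div_iff₀ (by linarith) (by linarith [hENr, hir])]
      have hmul : (i : ℝ) * E ≤ (i : ℝ) * N :=
        mul_le_mul_of_nonneg_left hENr.le (by positivity)
      nlinarith
    have hN1 : (1 : ℝ) < (N : ℝ) := by
      have : 2 ≤ N := by omega
      exact_mod_cast by omega
    have hstrict : ((E - 1 : ℕ) : ℝ) / ((N - 1 : ℕ) : ℝ) < c := by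
      rw [Nat.cast_sub (by omega), Nat.cast_sub (by omega : 1 ≤ N)]
      push_cast
      refine lt_of_lt_of_le ?_ hENc
      rw [div_lt_div_iff₀ (by linarith) (by linarith)]
      have hE1 : (1 : ℝ) ≤ (E : ℝ) := by exact_mod_cast (by omega : 1 ≤ E)
      nlinarith
    have hprod : (E.descFactorial ℓ : ℝ) / (N.descFactorial ℓ : ℝ)
        < (n : ℝ) ^ ((k : ℝ) * (ℓ : ℝ) * (d - 1)) := by
      rw [Nat.descFactorial_eq_prod_range, Nat.descFactorial_eq_prod_range,
        Nat.cast_prod, Nat.cast_prod, ← Finset.prod_div_distrib]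
      have hlt : (∏ i ∈ Finset.range ℓ, ((E - i : ℕ) : ℝ) / ((N - i : ℕ) : ℝ))
          < ∏ _i ∈ Finset.range ℓ, c := by
        apply Finset.prod_lt_prod
        · intro i hi
          rw [Finset.mem_range] at hi
          have h1 : 0 < E - i := by omega
          have h2 : 0 < N - i := by omega
          have h1' : (0 : ℝ) < ((E - i : ℕ) : ℝ) := by exact_mod_cast h1
          have h2' : (0 : ℝ) < ((N - i : ℕ) : ℝ) := by exact_mod_cast h2
          exact div_pos h1' h2'
        · intro i hi
          exact hfacle i (Finset.mem_range.1 hi)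
        · exact ⟨1, Finset.mem_range.2 (by omega), hstrict⟩
      refine lt_of_lt_of_le hlt ?_
      rw [Finset.prod_const, Finset.card_range, hcdef,
        ← Real.rpow_natCast ((n : ℝ) ^ ((k : ℝ) * (d - 1))) ℓ,
        ← Real.rpow_mul hn0.le]
      apply le_of_eq
      congr 1 <;> push_cast <;> ring_nf
    rw [htotal]
    calc ((((Finset.univ : Finset (Fin k → Fin n)).powersetCard E).filter
          (fun R => a ⊆ R)).card : ℝ) / (N.choose E : ℝ)
        ≤ (A : ℝ) / (N.choose E : ℝ) := by
          gcongr
          all_goals exact_mod_cast hfle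
    _ = (E.descFactorial ℓ : ℝ) / (N.descFactorial ℓ : ℝ) := key
    _ < _ := hprod

/-- In the positive model at density `0 < d < 1/k`: the number of `ℓ`-tuples of
positive length-`k` words labelling the cyclic relator diagram (each word's first
letter equal to the last letter of the previous word, cyclically) is exactly
`n^{(k-1)ℓ}`; the probability that a fixed set of `ℓ` distinct positive words lies in
a uniformly random set `R` of `⌊n^{kd}⌋` positive words is less than `n^{kℓ(d-1)}`;
and the probability that some injective `ℓ`-tuple in `R` fulfils the diagram is at
most `n^{(kd-1)ℓ}`. -/
theorem positive_model_diagram (n k ℓ : ℕ) (hn : 2 ≤ n) (hk : 2 ≤ k) (hℓ : 2 ≤ ℓ)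
    (d : ℝ) (hd0 : 0 < d) (hd1 : d < 1 / (k : ℝ)) :
    (Nat.card {w : Fin ℓ → Fin k → Fin n //
        ∀ j : Fin ℓ, w (j + ⟨1, by omega⟩) ⟨0, by omega⟩ = w j ⟨k - 1, by omega⟩}
      = n ^ ((k - 1) * ℓ)) ∧
    (∀ a : Finset (Fin k → Fin n), a.card = ℓ →
      ((((Finset.univ : Finset (Fin k → Fin n)).powersetCard
            ⌊(n : ℝ) ^ ((k : ℝ) * d)⌋₊).filter (fun R => a ⊆ R)).card : ℝ) /
          ((((Finset.univ : Finset (Fin k → Fin n)).powersetCard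
            ⌊(n : ℝ) ^ ((k : ℝ) * d)⌋₊).card : ℝ))
        < (n : ℝ) ^ ((k : ℝ) * (ℓ : ℝ) * (d - 1))) ∧
    (((((Finset.univ : Finset (Fin k → Fin n)).powersetCard
          ⌊(n : ℝ) ^ ((k : ℝ) * d)⌋₊).filter
        (fun R => ∃ w : Fin ℓ → Fin k → Fin n, Function.Injective w ∧
          (∀ j : Fin ℓ, w (j + ⟨1, by omega⟩) ⟨0, by omega⟩ = w j ⟨k - 1, by omega⟩) ∧
          ∀ j : Fin ℓ, w j ∈ R)).card : ℝ) /
        ((((Finset.univ : Finset (Fin k → Fin n)).powersetCard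
          ⌊(n : ℝ) ^ ((k : ℝ) * d)⌋₊).card : ℝ))
      ≤ (n : ℝ) ^ (((k : ℝ) * d - 1) * (ℓ : ℝ))) := by
  refine ⟨count_aux n k ℓ hk hℓ, fun a ha => prob_aux n k ℓ hn hk hℓ d hd0 hd1 a ha, ?_⟩
  have h1ℓ : 1 < ℓ := by omega
  have h0k : 0 < k := by omega
  have hk1k : k - 1 < k := by omega
  have hk1 : 1 ≤ k := by omega
  set E := ⌊(n : ℝ) ^ ((k : ℝ) * d)⌋₊ with hEdef
  set P := (Finset.univ : Finset (Fin k → Fin n)).powersetCard E with hPdef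
  have hn0 : (0 : ℝ) < n := by positivity
  have hn1 : (1 : ℝ) < n := by exact_mod_cast hn
  -- total is positive
  have hEn : E < n ^ k := by
    have hkd1 : (k : ℝ) * d < 1 := by
      have hk0 : (0 : ℝ) < k := by positivity
      have h := mul_lt_mul_of_pos_left hd1 hk0
      rwa [mul_one_div, div_self (ne_of_gt hk0)] at h
    have hElt : (E : ℝ) ≤ (n : ℝ) ^ ((k : ℝ) * d) := Nat.floor_le (by positivity)
    have hrlt : (n : ℝ) ^ ((k : ℝ) * d) < n := by
      calc (n : ℝ) ^ ((k : ℝ) * d) < (n : ℝ) ^ (1 : ℝ) :=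
        (Real.rpow_lt_rpow_left_iff hn1).2 hkd1
      _ = n := Real.rpow_one _
    have : E < n := by exact_mod_cast lt_of_le_of_lt hElt hrlt
    exact lt_of_lt_of_le this (Nat.le_self_pow (by omega) n)
  have htotal : P.card = (n ^ k).choose E := by
    rw [hPdef, Finset.card_powersetCard]
    congr 1
    simp
  have htotal_pos : (0 : ℝ) < (P.card : ℝ) := by
    rw [htotal]
    exact_mod_cast Nat.choose_pos hEn.le
  set T := (Finset.univ : Finset (Fin ℓ → Fin k → Fin n)).filter
    (fun (w : Fin ℓ → Fin k → Fin n) => Function.Injective w ∧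
      ∀ j : Fin ℓ, w (j + ⟨1, h1ℓ⟩) ⟨0, h0k⟩ = w j ⟨k - 1, hk1k⟩) with hTdef
  have hsub : P.filter
      (fun R => ∃ w : Fin ℓ → Fin k → Fin n, Function.Injective w ∧
        (∀ j : Fin ℓ, w (j + ⟨1, h1ℓ⟩) ⟨0, h0k⟩ = w j ⟨k - 1, hk1k⟩) ∧
        ∀ j : Fin ℓ, w j ∈ R)
      ⊆ T.biUnion (fun w => P.filter (fun R => Finset.image w Finset.univ ⊆ R)) := by
    intro R hR
    rw [Finset.mem_filter] at hR
    obtain ⟨hRP, w, hw1, hw2, hw3⟩ := hR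
    rw [Finset.mem_biUnion]
    refine ⟨w, ?_, ?_⟩
    · rw [hTdef, Finset.mem_filter]
      exact ⟨Finset.mem_univ _, hw1, hw2⟩
    · rw [Finset.mem_filter]
      exact ⟨hRP, Finset.image_subset_iff.2 (fun j _ => hw3 j)⟩
  have hcard : (P.filter
      (fun R => ∃ w : Fin ℓ → Fin k → Fin n, Function.Injective w ∧
        (∀ j : Fin ℓ, w (j + ⟨1, h1ℓ⟩) ⟨0, h0k⟩ = w j ⟨k - 1, hk1k⟩) ∧
        ∀ j : Fin ℓ, w j ∈ R)).card
      ≤ ∑ w ∈ T, (P.filter (fun R => Finset.image w Finset.univ ⊆ R)).card :=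
    le_trans (Finset.card_le_card hsub) (Finset.card_biUnion_le)
  have hTcard : T.card ≤ n ^ ((k - 1) * ℓ) := by
    have hstep : T ⊆ (Finset.univ : Finset (Fin ℓ → Fin k → Fin n)).filter
        (fun w => ∀ j : Fin ℓ,
          w (j + ⟨1, h1ℓ⟩) ⟨0, h0k⟩ = w j ⟨k - 1, hk1k⟩) := by
      rw [hTdef]
      intro w hw
      rw [Finset.mem_filter] at hw ⊢
      exact ⟨hw.1, hw.2.2⟩
    have hstep2 : ((Finset.univ : Finset (Fin ℓ → Fin k → Fin n)).filter
        (fun w => ∀ j : Fin ℓ,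
          w (j + ⟨1, h1ℓ⟩) ⟨0, h0k⟩ = w j ⟨k - 1, hk1k⟩)).card
        = n ^ ((k - 1) * ℓ) := by
      rw [← count_aux n k ℓ hk hℓ, Nat.card_eq_fintype_card, Fintype.card_subtype]
    rw [← hstep2]
    exact Finset.card_le_card hstep
  set c2 := (n : ℝ) ^ ((k : ℝ) * (ℓ : ℝ) * (d - 1)) with hc2def
  have hterm : ∀ w ∈ T,
      ((P.filter (fun R => Finset.image w Finset.univ ⊆ R)).card : ℝ) / (P.card : ℝ)
        ≤ c2 := by
    intro w hw
    rw [hTdef, Finset.mem_filter] at hw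
    have ha : (Finset.image w Finset.univ).card = ℓ := by
      rw [Finset.card_image_of_injective _ hw.2.1, Finset.card_univ, Fintype.card_fin]
    exact le_of_lt (prob_aux n k ℓ hn hk hℓ d hd0 hd1 _ ha)
  calc (((P.filter
      (fun R => ∃ w : Fin ℓ → Fin k → Fin n, Function.Injective w ∧
        (∀ j : Fin ℓ, w (j + ⟨1, h1ℓ⟩) ⟨0, h0k⟩ = w j ⟨k - 1, hk1k⟩) ∧
        ∀ j : Fin ℓ, w j ∈ R)).card : ℝ)) / (P.card : ℝ)
      ≤ ((∑ w ∈ T, (P.filter (fun R => Finset.image w Finset.univ ⊆ R)).card : ℕ) : ℝ)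
        / (P.card : ℝ) := by
        gcongr
        all_goals exact_mod_cast hcard
  _ = ∑ w ∈ T, ((P.filter (fun R => Finset.image w Finset.univ ⊆ R)).card : ℝ)
        / (P.card : ℝ) := by
      rw [← Finset.sum_div]
      norm_cast
  _ ≤ ∑ _w ∈ T, c2 := Finset.sum_le_sum hterm
  _ = (T.card : ℝ) * c2 := by rw [Finset.sum_const, nsmul_eq_mul]
  _ ≤ ((n ^ ((k - 1) * ℓ) : ℕ) : ℝ) * c2 := by
      have hc2pos : (0 : ℝ) ≤ c2 := le_of_lt (Real.rpow_pos_of_pos hn0 _)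
      exact mul_le_mul_of_nonneg_right (by exact_mod_cast hTcard) hc2pos
  _ = (n : ℝ) ^ (((k : ℝ) * d - 1) * (ℓ : ℝ)) := by
      rw [hc2def]
      push_cast
      rw [← Real.rpow_natCast (n : ℝ) ((k - 1) * ℓ), ← Real.rpow_add hn0]
      congr 1
      rw [Nat.cast_mul, Nat.cast_sub hk1]
      push_cast
      ring
end
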